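/- Let G : U →L[ℝ] Y and K : Y →L[ℝ] U with I - GK invertible, and define h_G(K) = -K(I - GK)⁻¹. Then I - G·h_G(K) is invertible, and h_G(h_G(K)) = K; i.e., h_G is an involution on its domain. -/
import Mathlib


/-- `h_G` is an involution on its domain: if `I - GK` is invertible and
`h_G(K) = -K(I-GK)⁻¹`, then `I - G·h_G(K)` is invertible and `h_G(h_G(K)) = K`. -/
theorem stmt_1 {U Y : Type*} [NormedAddCommGroup U] [NormedSpace ℝ U] [CompleteSpace U]
    [NormedAddCommGroup Y] [NormedSpace ℝ Y] [CompleteSpace Y]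
    (G : U →L[ℝ] Y) (K : Y →L[ℝ] U) (h : IsUnit (1 - G ∘L K))
    (hGK : Y →L[ℝ] U) (hdef : hGK = -(K ∘L Ring.inverse (1 - G ∘L K))) :
    IsUnit (1 - G ∘L hGK) ∧ -(hGK ∘L Ring.inverse (1 - G ∘L hGK)) = K := by
  set T : Y →L[ℝ] Y := 1 - G ∘L K with hT
  have hTi : T * Ring.inverse T = 1 := Ring.mul_inverse_cancel T h
  have hTi' : Ring.inverse T * T = 1 := Ring.inverse_mul_cancel T h
  have key : 1 - G ∘L hGK = Ring.inverse T := by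
    rw [hdef]
    have h1 : G ∘L (-(K ∘L Ring.inverse T)) = -((G ∘L K) ∘L Ring.inverse T) := by
      ext y; simp
    rw [h1]
    have h2 : (G ∘L K) = 1 - T := by rw [hT]; abel
    rw [h2]
    have : (1 - T) ∘L Ring.inverse T = (1 - T) * Ring.inverse T := rfl
    rw [this, sub_mul, one_mul, hTi]
    abel
  constructor
  · rw [key]
    exact ⟨⟨Ring.inverse T, T, hTi', hTi⟩, rfl⟩
  · rw [key]
    have h3 : Ring.inverse (Ring.inverse T) = T := by
      obtain ⟨u, hu⟩ := h
      rw [← hu, Ring.inverse_unit, Ring.inverse_unit u⁻¹, inv_inv]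
    rw [h3, hdef]
    ext y
    have : (Ring.inverse T * T) y = y := by rw [hTi']; rfl
    simpa using congrArg K this
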